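/- Fix (u, v) ∈ X × ℝⁿ. For every k ≥ 1 the CLVR iterates satisfy: (i) deterministically, φ_k(x_k) ≥ φ_{k−1}(x_{k−1}) + ((γ + σ A_{k−1})/2)‖x_k − x_{k−1}‖² + a_k (r(x_k) − r(u)) − a_k ⟨x_k − u, Aᵀ(y_k − y_{k−1})⟩ + a_k ⟨x_k − u, Aᵀy_k + c⟩ + m a_{k−1} ( ⟨x_{k−1} − u, Aᵀ(y_{k−1} − y_{k−2})⟩ + ⟨x_k − x_{k−1}, Aᵀ(y_{k−1} − y_{k−2})⟩ ); and (ii) E[ψ_k(y_k) | F_{k−1}] ≥ ψ_{k−1}(y_{k−1}) + (1/(2γ)) E[‖y_k − y_{k−1}‖² | F_{k−1}] + m a_k E[⟨y_k^{S^{j_k}} − v^{S^{j_k}}, b^{S^{j_k}}⟩ | F_{k−1}] + a_k E[⟨−A x_k, y_k − v⟩ | F_{k−1}] − (m−1) a_k E[⟨A x_k, y_k − y_{k−1}⟩ | F_{k−1}], where F_{k−1} is the σ-algebra generated by j₁, …, j_{k−1}. -/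

import Mathlib

open scoped RealInnerProductSpace BigOperators

section clvrHelpers
variable {E : Type*} [NormedAddCommGroup E] [InnerProductSpace ℝ E]

lemma clvr_norm_combo (p q : E) (s t : ℝ) (hst : s + t = 1) :
    ‖s • p + t • q‖ ^ 2 = s * ‖p‖ ^ 2 + t * ‖q‖ ^ 2 - s * t * ‖p - q‖ ^ 2 := by
  have h1 : ‖s • p + t • q‖ ^ 2 = s^2 * ‖p‖^2 + 2*(s*t)*⟪p,q⟫ + t^2*‖q‖^2 := by
    rw [← real_inner_self_eq_norm_sq, ← real_inner_self_eq_norm_sq, ← real_inner_self_eq_norm_sq]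
    simp only [inner_add_add_self, real_inner_smul_left, real_inner_smul_right]
    rw [real_inner_comm q p]; ring
  have h2 : ‖p - q‖ ^ 2 = ‖p‖^2 - 2*⟪p,q⟫ + ‖q‖^2 := by
    rw [← real_inner_self_eq_norm_sq, ← real_inner_self_eq_norm_sq, ← real_inner_self_eq_norm_sq]
    simp only [inner_sub_sub_self]
    rw [real_inner_comm q p]; ring
  rw [h1, h2]
  have : t = 1 - s := by linarith
  subst this; ring

lemma clvr_strong_growth {X : Set E} {f : E → ℝ} {μ : ℝ} (hμ : 0 ≤ μ) (hf : StrongConvexOn X μ f)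
    {p q : E} (hp : p ∈ X) (hq : q ∈ X) (hmin : ∀ z ∈ X, f p ≤ f z) :
    f p + μ / 2 * ‖q - p‖ ^ 2 ≤ f q := by
  have key : ∀ t : ℝ, 0 < t → t ≤ 1 → (1 - t) * (μ / 2 * ‖q - p‖ ^ 2) ≤ f q - f p := by
    intro t ht ht1
    have h := hf.2 hq hp ht.le (by linarith : (0:ℝ) ≤ 1 - t) (by ring)
    have hz : t • q + (1 - t) • p ∈ X := hf.1 hq hp ht.le (by linarith) (by ring)
    have h2 := hmin _ hz
    simp only [smul_eq_mul] at h
    nlinarith [h, h2]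
  have hC : 0 ≤ μ / 2 * ‖q - p‖ ^ 2 := by positivity
  set C := μ / 2 * ‖q - p‖ ^ 2 with hCdef
  have : ∀ ε : ℝ, 0 < ε → C ≤ f q - f p + ε := by
    intro ε hε
    obtain ⟨N, hN⟩ := exists_nat_gt (C / ε)
    have hN0 : 0 < (N:ℝ) + 1 := by positivity
    have ht := key (1 / ((N:ℝ)+1)) (by positivity) (by
      rw [div_le_one hN0]; linarith)
    have h3 : C / ((N:ℝ)+1) ≤ ε := by
      rw [div_le_iff₀ hN0]
      have : C / ε < (N:ℝ) + 1 := by linarith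
      rw [div_lt_iff₀ hε] at this
      nlinarith
    have : (1 - 1/((N:ℝ)+1)) * C = C - C / ((N:ℝ)+1) := by ring
    nlinarith [ht]
  linarith [le_of_forall_pos_le_add this]

lemma clvr_strong_uniq {X : Set E} {f : E → ℝ} {μ : ℝ} (hμ : 0 < μ) (hf : StrongConvexOn X μ f)
    {p q : E} (hp : p ∈ X) (hq : q ∈ X) (hminp : ∀ z ∈ X, f p ≤ f z)
    (hminq : ∀ z ∈ X, f q ≤ f z) : p = q := by
  have h := hf.2 hp hq (by norm_num : (0:ℝ) ≤ 1/2) (by norm_num : (0:ℝ) ≤ 1/2) (by norm_num)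
  have hz : (1/2 : ℝ) • p + (1/2 : ℝ) • q ∈ X := hf.1 hp hq (by norm_num) (by norm_num) (by norm_num)
  have h2 := hminp _ hz
  have h3 := hminq _ hp
  simp only [smul_eq_mul] at h
  have h4 : ‖p - q‖ ^ 2 ≤ 0 := by nlinarith
  have h5 : ‖p - q‖ = 0 := by nlinarith [norm_nonneg (p - q), sq_nonneg ‖p-q‖]
  exact sub_eq_zero.mp (norm_eq_zero.mp h5)

lemma clvr_aux_strong {X : Set E} (hX : Convex ℝ X) (W x0 : E) (C γ ρ σ' : ℝ) (hγ : 0 ≤ γ)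
    (hρ : 0 ≤ ρ) (r : E → ℝ) (hr : StrongConvexOn X σ' r) :
    StrongConvexOn X (γ + ρ * σ') (fun z => ⟪z, W⟫ + ρ * r z + γ / 2 * ‖z - x0‖ ^ 2 + C) := by
  refine ⟨hX, fun p hp q hq s t hs ht hst => ?_⟩
  have hr2 := hr.2 hp hq hs ht hst
  simp only [smul_eq_mul] at hr2 ⊢
  have hinner : ⟪s • p + t • q, W⟫ = s * ⟪p, W⟫ + t * ⟪q, W⟫ := by
    rw [inner_add_left, real_inner_smul_left, real_inner_smul_left]
  have hnorm : ‖(s • p + t • q) - x0‖ ^ 2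
      = s * ‖p - x0‖ ^ 2 + t * ‖q - x0‖ ^ 2 - s * t * ‖p - q‖ ^ 2 := by
    have he : (s • p + t • q) - x0 = s • (p - x0) + t • (q - x0) := by
      match_scalars <;> linarith
    rw [he, clvr_norm_combo _ _ _ _ hst]
    congr 2
    abel
  rw [hinner, hnorm]
  have hC : s * C + t * C = C := by rw [← add_mul, hst, one_mul]
  linarith [mul_le_mul_of_nonneg_left hr2 hρ, hC]

end clvrHelpers

/-- Matrix–vector product into Euclidean space. -/
noncomputable def mv {n d : ℕ} (A : Matrix (Fin n) (Fin d) ℝ)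
    (x : EuclideanSpace ℝ (Fin d)) : EuclideanSpace ℝ (Fin n) :=
  WithLp.toLp 2 (fun i => ∑ j, A i j * x j)

/-- Transposed matrix–vector product. -/
noncomputable def mvT {n d : ℕ} (A : Matrix (Fin n) (Fin d) ℝ)
    (y : EuclideanSpace ℝ (Fin n)) : EuclideanSpace ℝ (Fin d) :=
  WithLp.toLp 2 (fun j => ∑ i, A i j * y i)

/-- Lemma (lower bounds on the estimate sequences): part (i) is a deterministic lower
bound on `φ_k(x_k)`; part (ii) is a lower bound on `E[ψ_k(y_k) | F_{k−1}]`, where the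
conditional expectation given the first `k−1` block indices is the average over the
`m` possible values of the `k`-th index `j_k = ω (k−1)`. -/
theorem clvr_estimate_sequence_lower_bounds
    (n d m : ℕ) (hm : 0 < m)
    (A : Matrix (Fin n) (Fin d) ℝ) (b : EuclideanSpace ℝ (Fin n))
    (c : EuclideanSpace ℝ (Fin d))
    (X : Set (EuclideanSpace ℝ (Fin d)))
    (hXne : X.Nonempty) (hXc : IsClosed X) (hXconv : Convex ℝ X)
    (r : EuclideanSpace ℝ (Fin d) → ℝ) (σ : ℝ) (hσ : 0 ≤ σ)
    (hrconv : ConvexOn ℝ Set.univ r) (hrstrong : StrongConvexOn X σ r)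
    (S : Fin n → Fin m) (hS : Function.Surjective S)
    (Lhat : ℝ) (hLhat : 0 < Lhat)
    (hLhatBound : ∀ (jj : Fin m) (x : EuclideanSpace ℝ (Fin d)),
      Real.sqrt (∑ i ∈ Finset.univ.filter (fun i => S i = jj), (mv A x i) ^ 2) ≤ Lhat * ‖x‖)
    (γ : ℝ) (hγ : 0 < γ)
    -- step sizes
    (a Aseq : ℕ → ℝ)
    (ha0 : a 0 = 0) (hA0 : Aseq 0 = 0)
    (ha1 : a 1 = 1 / (Real.sqrt 2 * Lhat * m))
    (harec : ∀ k, 1 ≤ k →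
      a (k + 1) = Real.sqrt (1 + σ * Aseq k / γ) / (Real.sqrt 2 * Lhat * m))
    (hArec : ∀ k, Aseq (k + 1) = Aseq k + a (k + 1))
    -- a fixed pair (u, v)
    (u : EuclideanSpace ℝ (Fin d)) (v : EuclideanSpace ℝ (Fin n)) (hu : u ∈ X)
    -- initialization and iterates, as functions of the index sequence ω
    -- (ω (k-1) is the block index j_k drawn at iteration k)
    (x0 : EuclideanSpace ℝ (Fin d)) (y0 : EuclideanSpace ℝ (Fin n)) (hx0X : x0 ∈ X)
    (x : ℕ → (ℕ → Fin m) → EuclideanSpace ℝ (Fin d))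
    (y ybar : ℕ → (ℕ → Fin m) → EuclideanSpace ℝ (Fin n))
    (hx0 : ∀ ω, x 0 ω = x0) (hy0 : ∀ ω, y 0 ω = y0) (hybar0 : ∀ ω, ybar 0 ω = y0)
    -- estimate sequences
    (φ : ℕ → (ℕ → Fin m) → EuclideanSpace ℝ (Fin d) → ℝ)
    (ψ : ℕ → (ℕ → Fin m) → EuclideanSpace ℝ (Fin n) → ℝ)
    (hφ : ∀ k ω x', φ k ω x' =
      (∑ i ∈ Finset.Icc 1 k,
        a i * (⟪x' - u, mvT A (ybar (i - 1) ω) + c⟫ + r x' - r u))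
        + γ / 2 * ‖x' - x0‖ ^ 2)
    (hψ : ∀ k ω y', ψ k ω y' =
      (∑ i ∈ Finset.Icc 1 k, (m : ℝ) * a i *
        (-(∑ t ∈ Finset.univ.filter (fun t => S t = ω (i - 1)),
            (y' t - v t) * (mv A (x i ω) t - b t))))
        + 1 / (2 * γ) * ‖y' - y0‖ ^ 2)
    -- x_k minimizes φ_k over X; y_k minimizes ψ_k, i.e. it is given by the block update
    (hxmin : ∀ k, 1 ≤ k → ∀ ω, x k ω ∈ X ∧ ∀ x' ∈ X, φ k ω (x k ω) ≤ φ k ω x')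
    (hyupd : ∀ k, 1 ≤ k → ∀ ω, ∀ i : Fin n,
      y k ω i = if S i = ω (k - 1)
        then y (k - 1) ω i + γ * m * a k * (mv A (x k ω) i - b i)
        else y (k - 1) ω i)
    (hybar : ∀ k, 1 ≤ k → ∀ ω,
      ybar k ω = y k ω + (m * a k / a (k + 1)) • (y k ω - y (k - 1) ω)) :
    ∀ k : ℕ, 1 ≤ k → ∀ ω : ℕ → Fin m,
      -- (i) deterministic lower bound on φ_k(x_k)
      (φ (k - 1) ω (x (k - 1) ω)
          + (γ + σ * Aseq (k - 1)) / 2 * ‖x k ω - x (k - 1) ω‖ ^ 2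
          + a k * (r (x k ω) - r u)
          - a k * ⟪x k ω - u, mvT A (y k ω - y (k - 1) ω)⟫
          + a k * ⟪x k ω - u, mvT A (y k ω) + c⟫
          + (m : ℝ) * a (k - 1) *
              (⟪x (k - 1) ω - u, mvT A (y (k - 1) ω - y (k - 2) ω)⟫
                + ⟪x k ω - x (k - 1) ω, mvT A (y (k - 1) ω - y (k - 2) ω)⟫)
        ≤ φ k ω (x k ω)) ∧
      -- (ii) conditional-expectation lower bound on ψ_k(y_k)
      (ψ (k - 1) ω (y (k - 1) ω)
          + 1 / (2 * γ) * ((m : ℝ)⁻¹ * ∑ jj : Fin m,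
              ‖y k (Function.update ω (k - 1) jj) - y (k - 1) (Function.update ω (k - 1) jj)‖ ^ 2)
          + (m : ℝ) * a k * ((m : ℝ)⁻¹ * ∑ jj : Fin m,
              ∑ t ∈ Finset.univ.filter
                  (fun t => S t = (Function.update ω (k - 1) jj) (k - 1)),
                (y k (Function.update ω (k - 1) jj) t - v t) * b t)
          + a k * ((m : ℝ)⁻¹ * ∑ jj : Fin m,
              ⟪-(mv A (x k (Function.update ω (k - 1) jj))),
                y k (Function.update ω (k - 1) jj) - v⟫)
          - ((m : ℝ) - 1) * a k * ((m : ℝ)⁻¹ * ∑ jj : Fin m,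
              ⟪mv A (x k (Function.update ω (k - 1) jj)),
                y k (Function.update ω (k - 1) jj)
                  - y (k - 1) (Function.update ω (k - 1) jj)⟫)
        ≤ (m : ℝ)⁻¹ * ∑ jj : Fin m,
            ψ k (Function.update ω (k - 1) jj) (y k (Function.update ω (k - 1) jj))) := by
  have hmR : (0:ℝ) < m := by exact_mod_cast hm
  -- step size facts
  have Aeq : ∀ k, Aseq k = ∑ i ∈ Finset.Icc 1 k, a i := by
    intro k
    induction k with
    | zero => simp [hA0]
    | succ j IH =>
      rw [hArec j, IH, Finset.sum_Icc_succ_top (by omega : 1 ≤ j + 1)]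
  have apos : ∀ k : ℕ, 0 < a (k + 1) := by
    intro k
    induction k using Nat.strong_induction_on with
    | _ k IH =>
      match k with
      | 0 =>
        rw [ha1]
        exact div_pos one_pos (by positivity)
      | Nat.succ j =>
        rw [harec (j+1) (by omega)]
        have hA : 0 ≤ Aseq (j+1) := by
          rw [Aeq]
          apply Finset.sum_nonneg
          intro i hi
          simp only [Finset.mem_Icc] at hi
          obtain ⟨i', rfl⟩ : ∃ i', i = i' + 1 := ⟨i-1, by omega⟩
          exact (IH i' (by omega)).le
        have h1 : (0:ℝ) < 1 + σ * Aseq (j+1) / γ := by positivity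
        exact div_pos (Real.sqrt_pos.mpr h1) (by positivity)
  have anneg : ∀ k, 0 ≤ a k := by
    intro k
    match k with
    | 0 => rw [ha0]
    | Nat.succ j => exact (apos j).le
  have Anneg : ∀ k, 0 ≤ Aseq k := by
    intro k
    rw [Aeq]
    exact Finset.sum_nonneg fun i _ => anneg i
  -- linearity of mvT
  have mvT_sub : ∀ p q : EuclideanSpace ℝ (Fin n), mvT A (p - q) = mvT A p - mvT A q := by
    intro p q
    ext j
    simp only [mvT, PiLp.toLp_apply, PiLp.sub_apply, mul_sub, Finset.sum_sub_distrib]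
  have mvT_smul : ∀ (s : ℝ) (p : EuclideanSpace ℝ (Fin n)), mvT A (s • p) = s • mvT A p := by
    intro s p
    ext j
    simp only [mvT, PiLp.toLp_apply, PiLp.smul_apply, smul_eq_mul, Finset.mul_sum]
    apply Finset.sum_congr rfl
    intro i _
    ring
  have mvT_add : ∀ p q : EuclideanSpace ℝ (Fin n), mvT A (p + q) = mvT A p + mvT A q := by
    intro p q
    ext j
    simp only [mvT, PiLp.toLp_apply, PiLp.add_apply, mul_add, Finset.sum_add_distrib]
  -- φ at 0
  have phi0 : ∀ ω x', φ 0 ω x' = γ / 2 * ‖x' - x0‖ ^ 2 := by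
    intro ω x'
    rw [hφ]
    simp
  -- minimality including k = 0
  have hxmin' : ∀ k ω, x k ω ∈ X ∧ ∀ x' ∈ X, φ k ω (x k ω) ≤ φ k ω x' := by
    intro k ω
    match k with
    | 0 =>
      refine ⟨by rw [hx0]; exact hx0X, fun x' hx' => ?_⟩
      rw [phi0, phi0, hx0, sub_self, norm_zero]
      norm_num
      positivity
    | Nat.succ j => exact hxmin (j+1) (by omega) ω
  -- representation of φ
  have phi_repr : ∀ k ω, ∃ (W : EuclideanSpace ℝ (Fin d)) (C' : ℝ), ∀ z,
      φ k ω z = ⟪z, W⟫ + Aseq k * r z + γ / 2 * ‖z - x0‖ ^ 2 + C' := by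
    intro k ω
    refine ⟨∑ i ∈ Finset.Icc 1 k, a i • (mvT A (ybar (i - 1) ω) + c),
      ∑ i ∈ Finset.Icc 1 k, a i * (-⟪u, mvT A (ybar (i - 1) ω) + c⟫ - r u), fun z => ?_⟩
    rw [hφ, Aeq, inner_sum, Finset.sum_mul]
    have : ∀ i ∈ Finset.Icc 1 k,
        a i * (⟪z - u, mvT A (ybar (i - 1) ω) + c⟫ + r z - r u)
        = ⟪z, a i • (mvT A (ybar (i - 1) ω) + c)⟫ + a i * r z
          + a i * (-⟪u, mvT A (ybar (i - 1) ω) + c⟫ - r u) := by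
      intro i _
      rw [real_inner_smul_right, inner_sub_left]
      ring
    rw [Finset.sum_congr rfl this, Finset.sum_add_distrib, Finset.sum_add_distrib]
    ring
  -- strong convexity of φ
  have hφsc : ∀ k ω, StrongConvexOn X (γ + σ * Aseq k) (φ k ω) := by
    intro k ω
    obtain ⟨W, C', hrep⟩ := phi_repr k ω
    have : φ k ω = fun z => ⟪z, W⟫ + Aseq k * r z + γ / 2 * ‖z - x0‖ ^ 2 + C' := funext hrep
    rw [this, show γ + σ * Aseq k = γ + Aseq k * σ by ring]
    exact clvr_aux_strong hXconv W x0 C' γ (Aseq k) σ hγ.le (Anneg k) r hrstrong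
  have hmodnn : ∀ k, 0 ≤ γ + σ * Aseq k := fun k => by
    have := mul_nonneg hσ (Anneg k); linarith
  have hmodpos : ∀ k, 0 < γ + σ * Aseq k := fun k => by
    have := mul_nonneg hσ (Anneg k); linarith
  -- adaptedness
  have adapt : ∀ k : ℕ, (∀ ω ω', (∀ i, i < k → ω i = ω' i) → y k ω = y k ω') ∧
      (∀ ω ω', (∀ i, i + 1 < k → ω i = ω' i) → x k ω = x k ω') := by
    intro k
    induction k using Nat.strong_induction_on with
    | _ k IH =>
      match k with
      | 0 =>
        exact ⟨fun ω ω' _ => by rw [hy0, hy0], fun ω ω' _ => by rw [hx0, hx0]⟩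
      | Nat.succ j =>
        have hx : ∀ ω ω', (∀ i, i + 1 < j + 1 → ω i = ω' i) →
            x (j+1) ω = x (j+1) ω' := by
          intro ω ω' hagree
          have hφeq : ∀ z, φ (j+1) ω z = φ (j+1) ω' z := by
            intro z
            rw [hφ, hφ]
            congr 1
            apply Finset.sum_congr rfl
            intro i hi
            simp only [Finset.mem_Icc] at hi
            obtain ⟨l, rfl⟩ : ∃ l, i = l + 1 := ⟨i-1, by omega⟩
            have hybar_eq : ybar (l + 1 - 1) ω = ybar (l + 1 - 1) ω' := by
              simp only [Nat.add_sub_cancel]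
              match l, hi with
              | 0, _ => rw [hybar0, hybar0]
              | Nat.succ l', hi =>
                rw [hybar (l'+1) (by omega) ω, hybar (l'+1) (by omega) ω']
                have hy1 : y (l'+1) ω = y (l'+1) ω' :=
                  (IH (l'+1) (by omega)).1 ω ω' (fun i hi' => hagree i (by omega))
                have hy2 : y (l'+1-1) ω = y (l'+1-1) ω' := by
                  simp only [Nat.add_sub_cancel]
                  exact (IH l' (by omega)).1 ω ω' (fun i hi' => hagree i (by omega))
                rw [hy1, hy2]
            rw [hybar_eq]
          obtain ⟨hmem, hmin1⟩ := hxmin' (j+1) ω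
          obtain ⟨hmem', hmin2⟩ := hxmin' (j+1) ω'
          have hmin2' : ∀ z ∈ X, φ (j+1) ω (x (j+1) ω') ≤ φ (j+1) ω z := by
            intro z hz
            rw [hφeq (x (j+1) ω'), hφeq z]
            exact hmin2 z hz
          exact clvr_strong_uniq (hmodpos (j+1)) (hφsc (j+1) ω) hmem hmem' hmin1 hmin2'
        refine ⟨?_, hx⟩
        intro ω ω' hagree
        ext t
        have h1 : ω j = ω' j := hagree j (by omega)
        have h2 : y j ω = y j ω' := (IH j (by omega)).1 ω ω' (fun i hi => hagree i (by omega))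
        have h3 : x (j+1) ω = x (j+1) ω' := hx ω ω' (fun i hi => hagree i (by omega))
        rw [hyupd (j+1) (by omega) ω t, hyupd (j+1) (by omega) ω' t]
        simp only [Nat.add_sub_cancel]
        rw [h1, h2, h3]
  -- closed form for y
  have hyclosed : ∀ k ω t, y k ω t = y0 t + γ * ∑ i ∈ Finset.Icc 1 k,
      (if S t = ω (i - 1) then (m:ℝ) * a i * (mv A (x i ω) t - b t) else 0) := by
    intro k ω t
    induction k with
    | zero => simp [hy0]
    | succ j IH =>
      rw [hyupd (j+1) (by omega) ω t]
      simp only [Nat.add_sub_cancel]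
      rw [Finset.sum_Icc_succ_top (by omega : 1 ≤ j + 1)]
      simp only [Nat.add_sub_cancel]
      by_cases hc : S t = ω j
      · simp only [if_pos hc]
        rw [IH]
        ring
      · simp only [if_neg hc]
        rw [IH]
        ring
  -- coordinate formula for squared norms
  have normsq : ∀ z : EuclideanSpace ℝ (Fin n), ‖z‖ ^ 2 = ∑ t, (z t) ^ 2 := by
    intro z
    rw [← real_inner_self_eq_norm_sq, PiLp.inner_apply]
    apply Finset.sum_congr rfl
    intro t _
    simp [RCLike.inner_apply, sq]
  have innern : ∀ p q : EuclideanSpace ℝ (Fin n), ⟪p, q⟫ = ∑ t, p t * q t := by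
    intro p q
    rw [PiLp.inner_apply]
    apply Finset.sum_congr rfl
    intro t _
    simp [RCLike.inner_apply]; ring
  -- closed form for ψ
  have psi_closed : ∀ k ω y', ψ k ω y' =
      ∑ t, (-(y' t - v t) * ((y k ω t - y0 t) / γ) + 1 / (2*γ) * (y' t - y0 t)^2) := by
    intro k ω y'
    rw [hψ]
    have hpart1 : ∀ i ∈ Finset.Icc 1 k, (m : ℝ) * a i *
        (-(∑ t ∈ Finset.univ.filter (fun t => S t = ω (i - 1)),
            (y' t - v t) * (mv A (x i ω) t - b t)))
        = ∑ t, -(y' t - v t) *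
            (if S t = ω (i-1) then (m:ℝ) * a i * (mv A (x i ω) t - b t) else 0) := by
      intro i _
      rw [Finset.sum_filter, ← Finset.sum_neg_distrib, Finset.mul_sum]
      apply Finset.sum_congr rfl
      intro t _
      by_cases hc : S t = ω (i-1)
      · simp only [if_pos hc]; ring
      · simp only [if_neg hc]; ring
    rw [Finset.sum_congr rfl hpart1, Finset.sum_comm]
    have hnorm : 1 / (2*γ) * ‖y' - y0‖^2 = ∑ t, 1 / (2*γ) * (y' t - y0 t)^2 := by
      rw [normsq, Finset.mul_sum]
      apply Finset.sum_congr rfl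
      intro t _
      rw [PiLp.sub_apply]
    rw [hnorm, ← Finset.sum_add_distrib]
    apply Finset.sum_congr rfl
    intro t _
    congr 1
    rw [← Finset.mul_sum]
    congr 1
    have := hyclosed k ω t
    field_simp
    linarith [this]
  -- per-iterate ψ step identity
  have psi_step : ∀ K (ω : ℕ → Fin m), ψ (K+1) ω (y (K+1) ω) = ψ K ω (y K ω)
      + 1 / (2*γ) * ‖y (K+1) ω - y K ω‖ ^ 2
      - (m:ℝ) * a (K+1) * ∑ t ∈ Finset.univ.filter (fun t => S t = ω K),
          (y (K+1) ω t - v t) * (mv A (x (K+1) ω) t - b t) := by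
    intro K ω
    rw [psi_closed (K+1) ω, psi_closed K ω]
    have hnorm : 1/(2*γ) * ‖y (K+1) ω - y K ω‖^2
        = ∑ t, 1/(2*γ) * (y (K+1) ω t - y K ω t)^2 := by
      rw [normsq, Finset.mul_sum]
      exact Finset.sum_congr rfl fun t _ => by rw [PiLp.sub_apply]
    have hfil : (m:ℝ) * a (K+1) * ∑ t ∈ Finset.univ.filter (fun t => S t = ω K),
          (y (K+1) ω t - v t) * (mv A (x (K+1) ω) t - b t)
        = ∑ t, (y (K+1) ω t - v t) * (y (K+1) ω t - y K ω t) / γ := by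
      rw [Finset.sum_filter, Finset.mul_sum]
      apply Finset.sum_congr rfl
      intro t _
      have hu := hyupd (K+1) (by omega) ω t
      simp only [Nat.add_sub_cancel] at hu
      by_cases hc : S t = ω K
      · simp only [if_pos hc] at hu ⊢
        rw [hu]
        field_simp
        ring
      · simp only [if_neg hc] at hu ⊢
        rw [hu]
        simp
    rw [hnorm, hfil, ← Finset.sum_add_distrib, ← Finset.sum_sub_distrib]
    apply Finset.sum_congr rfl
    intro t _
    field_simp
    ring
  -- main statement
  intro k hk ω
  obtain ⟨K, rfl⟩ : ∃ K, k = K + 1 := ⟨k - 1, by omega⟩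
  constructor
  · -- part (i)
    simp only [Nat.add_sub_cancel, show K + 1 - 2 = K - 1 by omega]
    have hsplit : φ (K+1) ω (x (K+1) ω) = φ K ω (x (K+1) ω)
        + a (K+1) * (⟪x (K+1) ω - u, mvT A (ybar K ω) + c⟫ + r (x (K+1) ω) - r u) := by
      rw [hφ, hφ, Finset.sum_Icc_succ_top (by omega : 1 ≤ K+1)]
      simp only [Nat.add_sub_cancel]
      ring
    have hgrow : φ K ω (x K ω) + (γ + σ * Aseq K)/2 * ‖x (K+1) ω - x K ω‖^2
        ≤ φ K ω (x (K+1) ω) := by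
      obtain ⟨hmem, hmin⟩ := hxmin' K ω
      exact clvr_strong_growth (hmodnn K) (hφsc K ω) hmem (hxmin' (K+1) ω).1 hmin
    have hlin : a (K+1) * ⟪x (K+1) ω - u, mvT A (ybar K ω) + c⟫
        = - (a (K+1) * ⟪x (K+1) ω - u, mvT A (y (K+1) ω - y K ω)⟫)
          + a (K+1) * ⟪x (K+1) ω - u, mvT A (y (K+1) ω) + c⟫
          + (m:ℝ) * a K * (⟪x K ω - u, mvT A (y K ω - y (K-1) ω)⟫
              + ⟪x (K+1) ω - x K ω, mvT A (y K ω - y (K-1) ω)⟫) := by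
      match K with
      | 0 =>
        rw [hybar0, mvT_sub, mvT_sub, hy0]
        simp only [Nat.zero_sub, hy0, sub_self, inner_sub_right, inner_zero_right,
          inner_add_right, ha0]
        ring
      | Nat.succ l =>
        have hbar := hybar (l+1) (by omega) ω
        simp only [Nat.succ_eq_add_one, Nat.add_sub_cancel] at hbar ⊢
        have hane : a (l+1+1) ≠ 0 := ne_of_gt (apos (l+1))
        have hsum : ∀ (D : EuclideanSpace ℝ (Fin d)), ⟪x (l+1+1) ω - u, D⟫
            = ⟪x (l+1) ω - u, D⟫ + ⟪x (l+1+1) ω - x (l+1) ω, D⟫ := by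
          intro D
          rw [← inner_add_left]
          congr 1
          abel
        have hY : ⟪x (l+1+1) ω - u, mvT A (y (l+1) ω)⟫
            = ⟪x (l+1+1) ω - u, mvT A (y (l+1+1) ω)⟫
              - ⟪x (l+1+1) ω - u, mvT A (y (l+1+1) ω - y (l+1) ω)⟫ := by
          rw [mvT_sub, inner_sub_right]
          ring
        rw [hbar, mvT_add, mvT_smul]
        simp only [inner_add_right, real_inner_smul_right]
        rw [hY, hsum (mvT A (y (l+1) ω - y l ω))]
        field_simp
        ring
    linarith [hsplit, hgrow, hlin]
  · -- part (ii)
    simp only [Nat.add_sub_cancel]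
    apply le_of_eq
    have hxsame : ∀ jj : Fin m, x (K+1) (Function.update ω K jj) = x (K+1) ω := fun jj =>
      (adapt (K+1)).2 (Function.update ω K jj) ω
        (fun i hi => Function.update_of_ne (by omega) _ _)
    have hysame : ∀ jj : Fin m, y K (Function.update ω K jj) = y K ω := fun jj =>
      (adapt K).1 (Function.update ω K jj) ω
        (fun i hi => Function.update_of_ne (by omega) _ _)
    have hψsame : ∀ jj : Fin m, ψ K (Function.update ω K jj) (y K (Function.update ω K jj))
        = ψ K ω (y K ω) := by
      intro jj
      rw [psi_closed K (Function.update ω K jj), psi_closed K ω, hysame jj]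
    -- abbreviations  (z = y K ω, P = mv A (x (K+1) ω))
    have hYrel : ∀ (jj : Fin m) (t : Fin n), y (K+1) (Function.update ω K jj) t
        = y K ω t + (if S t = jj then γ * m * a (K+1) * (mv A (x (K+1) ω) t - b t) else 0) := by
      intro jj t
      have hu := hyupd (K+1) (by omega) (Function.update ω K jj) t
      simp only [Nat.add_sub_cancel, Function.update_self, hysame jj, hxsame jj] at hu
      rw [hu]
      by_cases hc : S t = jj
      · simp [hc]
      · simp [hc]
    -- rewrite the right-hand side using the ψ step identity
    have hRHS : ∑ jj : Fin m, ψ (K+1) (Function.update ω K jj) (y (K+1) (Function.update ω K jj))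
        = ∑ jj : Fin m, (ψ K ω (y K ω)
            + 1 / (2*γ) * ‖y (K+1) (Function.update ω K jj) - y K (Function.update ω K jj)‖ ^ 2
            - (m:ℝ) * a (K+1) * ∑ t ∈ Finset.univ.filter (fun t => S t = jj),
                (y (K+1) (Function.update ω K jj) t - v t) * (mv A (x (K+1) ω) t - b t)) := by
      apply Finset.sum_congr rfl
      intro jj _
      rw [psi_step K (Function.update ω K jj), hψsame jj]
      simp only [Function.update_self, hxsame jj]
    rw [hRHS]
    simp only [Function.update_self, hxsame]
    -- expand the inner products coordinatewise
    have hI1 : ∀ jj : Fin m, ⟪-(mv A (x (K+1) ω)),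
          y (K+1) (Function.update ω K jj) - v⟫
        = ∑ t, -(mv A (x (K+1) ω) t) * (y (K+1) (Function.update ω K jj) t - v t) := by
      intro jj
      rw [innern]
      exact Finset.sum_congr rfl fun t _ => by
        simp only [PiLp.neg_apply, PiLp.sub_apply]
    have hI2 : ∀ jj : Fin m, ⟪mv A (x (K+1) ω),
          y (K+1) (Function.update ω K jj) - y K (Function.update ω K jj)⟫
        = ∑ t, mv A (x (K+1) ω) t * (y (K+1) (Function.update ω K jj) t - y K ω t) := by
      intro jj
      rw [innern]
      exact Finset.sum_congr rfl fun t _ => by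
        simp only [PiLp.sub_apply, hysame jj]
    simp only [hI1, hI2]
    -- distribute the average on the right-hand side
    rw [Finset.sum_sub_distrib, Finset.sum_add_distrib, Finset.sum_const, Finset.card_univ,
      Fintype.card_fin, nsmul_eq_mul, ← Finset.mul_sum, ← Finset.mul_sum]
    -- evaluate each averaged sum via the block structure
    have E1 : ∑ jj : Fin m, ∑ t ∈ Finset.univ.filter (fun t => S t = jj),
          (y (K+1) (Function.update ω K jj) t - v t) * b t
        = ∑ t, (y K ω t + γ * m * a (K+1) * (mv A (x (K+1) ω) t - b t) - v t) * b t := by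
      simp only [Finset.sum_filter]
      rw [Finset.sum_comm]
      apply Finset.sum_congr rfl
      intro t _
      have h1 : ∀ jj : Fin m, (if S t = jj then (y (K+1) (Function.update ω K jj) t - v t) * b t else 0)
          = (if S t = jj then (y K ω t + γ * m * a (K+1) * (mv A (x (K+1) ω) t - b t) - v t) * b t else 0) := by
        intro jj
        by_cases hc : S t = jj
        · simp [hYrel jj t, hc]
        · simp only [if_neg hc]
      rw [Finset.sum_congr rfl (fun jj _ => h1 jj), Finset.sum_ite_eq]
      simp
    have E2 : ∑ jj : Fin m, ∑ t, -(mv A (x (K+1) ω) t) * (y (K+1) (Function.update ω K jj) t - v t)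
        = ∑ t, ((m:ℝ) * (-(mv A (x (K+1) ω) t) * (y K ω t - v t))
            + -(mv A (x (K+1) ω) t) * (γ * m * a (K+1) * (mv A (x (K+1) ω) t - b t))) := by
      rw [Finset.sum_comm]
      apply Finset.sum_congr rfl
      intro t _
      have h1 : ∀ jj : Fin m, -(mv A (x (K+1) ω) t) * (y (K+1) (Function.update ω K jj) t - v t)
          = -(mv A (x (K+1) ω) t) * (y K ω t - v t)
            + (if S t = jj then -(mv A (x (K+1) ω) t) * (γ * m * a (K+1) * (mv A (x (K+1) ω) t - b t)) else 0) := by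
        intro jj
        rw [hYrel jj t]
        by_cases hc : S t = jj
        · simp only [if_pos hc]; ring
        · simp only [if_neg hc]; ring
      rw [Finset.sum_congr rfl (fun jj _ => h1 jj), Finset.sum_add_distrib, Finset.sum_const,
        Finset.card_univ, Fintype.card_fin, nsmul_eq_mul, Finset.sum_ite_eq]
      simp
    have E3 : ∑ jj : Fin m, ∑ t, mv A (x (K+1) ω) t * (y (K+1) (Function.update ω K jj) t - y K ω t)
        = ∑ t, mv A (x (K+1) ω) t * (γ * m * a (K+1) * (mv A (x (K+1) ω) t - b t)) := by
      rw [Finset.sum_comm]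
      apply Finset.sum_congr rfl
      intro t _
      have h1 : ∀ jj : Fin m, mv A (x (K+1) ω) t * (y (K+1) (Function.update ω K jj) t - y K ω t)
          = (if S t = jj then mv A (x (K+1) ω) t * (γ * m * a (K+1) * (mv A (x (K+1) ω) t - b t)) else 0) := by
        intro jj
        rw [hYrel jj t]
        by_cases hc : S t = jj
        · simp only [if_pos hc]; ring
        · simp only [if_neg hc]; ring
      rw [Finset.sum_congr rfl (fun jj _ => h1 jj), Finset.sum_ite_eq]
      simp
    have E4 : ∑ jj : Fin m, ∑ t ∈ Finset.univ.filter (fun t => S t = jj),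
          (y (K+1) (Function.update ω K jj) t - v t) * (mv A (x (K+1) ω) t - b t)
        = ∑ t, (y K ω t + γ * m * a (K+1) * (mv A (x (K+1) ω) t - b t) - v t)
            * (mv A (x (K+1) ω) t - b t) := by
      simp only [Finset.sum_filter]
      rw [Finset.sum_comm]
      apply Finset.sum_congr rfl
      intro t _
      have h1 : ∀ jj : Fin m, (if S t = jj then (y (K+1) (Function.update ω K jj) t - v t) * (mv A (x (K+1) ω) t - b t) else 0)
          = (if S t = jj then (y K ω t + γ * m * a (K+1) * (mv A (x (K+1) ω) t - b t) - v t) * (mv A (x (K+1) ω) t - b t) else 0) := by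
        intro jj
        by_cases hc : S t = jj
        · simp [hYrel jj t, hc]
        · simp only [if_neg hc]
      rw [Finset.sum_congr rfl (fun jj _ => h1 jj), Finset.sum_ite_eq]
      simp
    -- key combinatorial identity
    have hmain : (m:ℝ) * a (K+1) * (∑ jj : Fin m, ∑ t ∈ Finset.univ.filter (fun t => S t = jj),
            (y (K+1) (Function.update ω K jj) t - v t) * b t)
        + a (K+1) * (∑ jj : Fin m, ∑ t, -(mv A (x (K+1) ω) t)
            * (y (K+1) (Function.update ω K jj) t - v t))
        - ((m:ℝ) - 1) * a (K+1) * (∑ jj : Fin m, ∑ t, mv A (x (K+1) ω) t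
            * (y (K+1) (Function.update ω K jj) t - y K ω t))
        = - ((m:ℝ) * a (K+1) * ∑ jj : Fin m, ∑ t ∈ Finset.univ.filter (fun t => S t = jj),
            (y (K+1) (Function.update ω K jj) t - v t) * (mv A (x (K+1) ω) t - b t)) := by
      rw [E1, E2, E3, E4]
      simp only [Finset.mul_sum, ← Finset.sum_sub_distrib, ← Finset.sum_add_distrib,
        ← Finset.sum_neg_distrib]
      apply Finset.sum_congr rfl
      intro t _
      ring
    linear_combination ((m:ℝ)⁻¹) * hmain
      - (ψ K ω (y K ω)) * (inv_mul_cancel₀ (ne_of_gt hmR))
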